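/- Define the operator Δ_{i,N} = Σ_{j≠i} (xᵢ+xⱼ)/(xᵢ−xⱼ)(1 − s_{ij}) acting on Laurent polynomials in x₁,…,x_N, where s_{ij} transposes xᵢ and xⱼ. Then for every positive integer l, Δ_{i,N}(xᵢ^l) = N·xᵢ^l + 2xᵢ^{l−1}p₁ + 2xᵢ^{l−2}p₂ + ⋯ + 2xᵢ p_{l−1} + p_l − 2l·xᵢ^l, where p_r = x₁^r + ⋯ + x_N^r. -/

import Mathlib

open MvPolynomial

/-- The embedding of polynomials into their fraction field. -/
noncomputable def toFrac (N : ℕ) :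
    MvPolynomial (Fin N) ℝ →+* FractionRing (MvPolynomial (Fin N) ℝ) :=
  algebraMap _ _

private lemma key {K : Type*} [CommRing K] (a b : K) (l : ℕ) (hl : 0 < l) :
    (a + b) * ∑ k ∈ Finset.range l, a ^ k * b ^ (l - 1 - k) =
      a ^ l + b ^ l + 2 * ∑ m ∈ Finset.Ico 1 l, a ^ (l - m) * b ^ m := by
  have h1 : ∑ k ∈ Finset.range l, a ^ (k + 1) * b ^ (l - 1 - k) =
      ∑ m ∈ Finset.range l, a ^ (l - m) * b ^ m := by
    rw [← Finset.sum_range_reflect (fun m => a ^ (l - m) * b ^ m) l]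
    refine Finset.sum_congr rfl fun k hk => ?_
    rw [Finset.mem_range] at hk
    rw [show l - (l - 1 - k) = k + 1 by omega, show l - 1 - k = l - 1 - k from rfl]
  have h2 : ∑ k ∈ Finset.range l, a ^ k * b ^ (l - k) =
      ∑ m ∈ Finset.Ico 1 (l + 1), a ^ (l - m) * b ^ m := by
    rw [← Finset.sum_range_reflect (fun k => a ^ k * b ^ (l - k)) l,
      Finset.sum_Ico_eq_sum_range]
    simp only [Nat.add_sub_cancel]
    refine Finset.sum_congr rfl fun k hk => ?_
    rw [Finset.mem_range] at hk
    rw [show l - (l - 1 - k) = k + 1 by omega, show l - (1 + k) = l - 1 - k by omega, add_comm 1 k]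
  have expand : (a + b) * ∑ k ∈ Finset.range l, a ^ k * b ^ (l - 1 - k) =
      (∑ k ∈ Finset.range l, a ^ (k + 1) * b ^ (l - 1 - k)) +
      (∑ k ∈ Finset.range l, a ^ k * b ^ (l - k)) := by
    rw [add_mul, Finset.mul_sum, Finset.mul_sum]
    congr 1
    · exact Finset.sum_congr rfl fun k hk => by ring
    · refine Finset.sum_congr rfl fun k hk => ?_
      rw [Finset.mem_range] at hk
      rw [show l - k = (l - 1 - k) + 1 by omega]
      ring
  rw [expand, h1, h2, Finset.range_eq_Ico,
    Finset.sum_eq_sum_Ico_succ_bot hl (fun m => a ^ (l - m) * b ^ m),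
    Finset.sum_Ico_succ_top (by omega : 1 ≤ l) (fun m => a ^ (l - m) * b ^ m)]
  simp only [Nat.sub_zero, pow_zero, Nat.sub_self]
  ring

theorem stmt_13 (N l : ℕ) (hl : 0 < l) (i : Fin N) :
    (∑ j ∈ Finset.univ.erase i,
        ((toFrac N (X i) + toFrac N (X j)) / (toFrac N (X i) - toFrac N (X j))) *
          (toFrac N (X i) ^ l - toFrac N (X j) ^ l)) =
      (N : FractionRing (MvPolynomial (Fin N) ℝ)) * toFrac N (X i) ^ l +
        (∑ m ∈ Finset.Ico 1 l, 2 * toFrac N (X i) ^ (l - m) * toFrac N (∑ r, X r ^ m)) +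
        toFrac N (∑ r, X r ^ l) - 2 * (l : FractionRing (MvPolynomial (Fin N) ℝ)) *
          toFrac N (X i) ^ l := by
  set a := toFrac N (X i) with ha
  have hinj : Function.Injective (toFrac N) := IsFractionRing.injective _ _
  have hN : 1 ≤ N := i.pos
  -- step 1: each summand
  have h1 : ∀ j ∈ Finset.univ.erase i,
      ((a + toFrac N (X j)) / (a - toFrac N (X j))) * (a ^ l - toFrac N (X j) ^ l) =
        a ^ l + toFrac N (X j) ^ l +
          2 * ∑ m ∈ Finset.Ico 1 l, a ^ (l - m) * toFrac N (X j) ^ m := by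
    intro j hj
    have hij : j ≠ i := Finset.ne_of_mem_erase hj
    set b := toFrac N (X j) with hb
    have hne : a - b ≠ 0 := by
      rw [ha, hb, ← map_sub]
      simp only [ne_eq, map_eq_zero_iff _ hinj, sub_eq_zero]
      exact fun h => hij (X_injective h).symm
    rw [← geom_sum₂_mul a b l, ← key a b l hl]
    field_simp
  rw [Finset.sum_congr rfl h1]
  have hcard : (Finset.univ.erase i).card = N - 1 := by
    rw [Finset.card_erase_of_mem (Finset.mem_univ i), Finset.card_univ, Fintype.card_fin]
  have hsum1 : ∀ m : ℕ, ∑ j ∈ Finset.univ.erase i, toFrac N (X j) ^ m =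
      toFrac N (∑ r, X r ^ m) - a ^ m := by
    intro m
    rw [map_sum]
    simp only [map_pow]
    rw [← Finset.sum_erase_add _ _ (Finset.mem_univ i)]
    ring
  rw [Finset.sum_add_distrib, Finset.sum_add_distrib, Finset.sum_const, hcard, hsum1]
  have hswap : ∑ j ∈ Finset.univ.erase i,
      2 * ∑ m ∈ Finset.Ico 1 l, a ^ (l - m) * toFrac N (X j) ^ m =
      2 * ∑ m ∈ Finset.Ico 1 l, a ^ (l - m) * (toFrac N (∑ r, X r ^ m) - a ^ m) := by
    rw [← Finset.mul_sum, Finset.sum_comm]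
    congr 1
    refine Finset.sum_congr rfl fun m _ => ?_
    rw [← Finset.mul_sum, hsum1]
  rw [hswap]
  have hdist : ∑ m ∈ Finset.Ico 1 l, a ^ (l - m) * (toFrac N (∑ r, X r ^ m) - a ^ m) =
      (∑ m ∈ Finset.Ico 1 l, a ^ (l - m) * toFrac N (∑ r, X r ^ m)) - (l - 1 : ℕ) * a ^ l := by
    simp only [mul_sub]
    rw [Finset.sum_sub_distrib]
    congr 1
    have : ∀ m ∈ Finset.Ico 1 l, a ^ (l - m) * a ^ m = a ^ l := by
      intro m hm
      rw [Finset.mem_Ico] at hm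
      rw [← pow_add, Nat.sub_add_cancel (le_of_lt hm.2)]
    rw [Finset.sum_congr rfl this, Finset.sum_const, Nat.card_Ico, nsmul_eq_mul]
  rw [hdist]
  have hsum2 : ∑ m ∈ Finset.Ico 1 l, 2 * a ^ (l - m) * toFrac N (∑ r, X r ^ m) =
      2 * ∑ m ∈ Finset.Ico 1 l, a ^ (l - m) * toFrac N (∑ r, X r ^ m) := by
    rw [Finset.mul_sum]; exact Finset.sum_congr rfl fun m _ => by ring
  rw [hsum2]
  have hc1 : ((N - 1 : ℕ) : FractionRing (MvPolynomial (Fin N) ℝ)) = (N : _) - 1 := by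
    rw [Nat.cast_sub hN, Nat.cast_one]
  have hc2 : ((l - 1 : ℕ) : FractionRing (MvPolynomial (Fin N) ℝ)) = (l : _) - 1 := by
    rw [Nat.cast_sub hl, Nat.cast_one]
  rw [nsmul_eq_mul, hc1, hc2]
  ring
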